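/- For all i ≥ -1 and m, n ∈ ℤ with i odd: N(m α_i + n α_{i+1}) = (m - n/γ_{i+2}) · (n√Δ + m N_i - n N_i/γ_{i+2}), where N_i = |N(α_i)|, Δ is the discriminant, and γ_{i+2} is the complete quotient. -/

import Mathlib

open Real Filter

noncomputable def omg (D : ℕ) : ℝ := if D % 4 = 1 then (1 + Real.sqrt D) / 2 else Real.sqrt D

noncomputable def omgc (D : ℕ) : ℝ := if D % 4 = 1 then (1 - Real.sqrt D) / 2 else -Real.sqrt D

noncomputable def sigmaD (D : ℕ) : ℝ := omg D + (⌊-omgc D⌋ : ℤ)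

noncomputable def gam (D : ℕ) : ℕ → ℝ
  | 0 => sigmaD D
  | n + 1 => 1 / (gam D n - ⌊gam D n⌋)

/-- partial quotients of the continued fraction of σ_D -/
noncomputable def uD (D : ℕ) (n : ℕ) : ℤ := ⌊gam D n⌋

noncomputable def emb1 (D : ℕ) (x : ℤ × ℤ) : ℝ := (x.1 : ℝ) + (x.2 : ℝ) * omg D

noncomputable def emb2 (D : ℕ) (x : ℤ × ℤ) : ℝ := (x.1 : ℝ) + (x.2 : ℝ) * omgc D

def conjp (D : ℕ) (x : ℤ × ℤ) : ℤ × ℤ := if D % 4 = 1 then (x.1 + x.2, -x.2) else (x.1, -x.2)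

def TotPos (D : ℕ) (x : ℤ × ℤ) : Prop := 0 < emb1 D x ∧ 0 < emb2 D x

def Indec (D : ℕ) (x : ℤ × ℤ) : Prop :=
  TotPos D x ∧ ¬ ∃ y z : ℤ × ℤ, TotPos D y ∧ TotPos D z ∧ x = y + z

noncomputable def Nm (D : ℕ) (x : ℤ × ℤ) : ℝ := emb1 D x * emb2 D x

noncomputable def disc (D : ℕ) : ℝ := if D % 4 = 1 then (D : ℝ) else 4 * (D : ℝ)

def UniqDec (D : ℕ) (x : ℤ × ℤ) : Prop :=
  ∃! m : Multiset (ℤ × ℤ), (∀ y ∈ m, Indec D y) ∧ m.sum = x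

/-- first real embedding of α_i = p_i - q_i ω_D' -/
noncomputable def ar (D : ℕ) (p q : ℤ → ℤ) (i : ℤ) : ℝ := (p i : ℝ) - (q i : ℝ) * omgc D

/-- second real embedding (Galois conjugate) of α_i -/
noncomputable def ac (D : ℕ) (p q : ℤ → ℤ) (i : ℤ) : ℝ := (p i : ℝ) - (q i : ℝ) * omg D

/-- first embedding of the semiconvergent α_{i,r} = α_i + r α_{i+1} -/
noncomputable def ar2 (D : ℕ) (p q : ℤ → ℤ) (i r : ℤ) : ℝ := ar D p q i + (r : ℝ) * ar D p q (i + 1)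

/-- conjugate embedding of the semiconvergent α_{i,r} -/
noncomputable def ac2 (D : ℕ) (p q : ℤ → ℤ) (i r : ℤ) : ℝ := ac D p q i + (r : ℝ) * ac D p q (i + 1)

/-- N_i = |N(α_i)| -/
noncomputable def Ni (D : ℕ) (p q : ℤ → ℤ) (i : ℤ) : ℝ := |ar D p q i * ac D p q i|

theorem stmt14 (D : ℕ)
    (hD2 : 2 ≤ D) (hsq : Squarefree D)
    (p q : ℤ → ℤ)
    (hpm1 : p (-1) = 1) (hqm1 : q (-1) = 0)
    (hp0 : p 0 = ⌈(uD D 0 : ℚ) / 2⌉) (hq0 : q 0 = 1)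
    (hprec : ∀ i : ℤ, -1 ≤ i → p (i + 2) = uD D (i + 2).toNat * p (i + 1) + p i)
    (hqrec : ∀ i : ℤ, -1 ≤ i → q (i + 2) = uD D (i + 2).toNat * q (i + 1) + q i)
 :
    ∀ i : ℤ, -1 ≤ i → Odd i → ∀ m n : ℤ,
      ((m : ℝ) * ar D p q i + (n : ℝ) * ar D p q (i + 1)) *
        ((m : ℝ) * ac D p q i + (n : ℝ) * ac D p q (i + 1)) =
      ((m : ℝ) - (n : ℝ) / gam D (i + 2).toNat) *
        ((n : ℝ) * Real.sqrt (disc D) + (m : ℝ) * Ni D p q i -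
          (n : ℝ) * Ni D p q i / gam D (i + 2).toNat) := by
  -- basic facts about √D
  have hnsq : ¬ IsSquare D := by
    rintro ⟨r, hr⟩
    have : IsUnit r := hsq r (hr ▸ dvd_rfl)
    rw [Nat.isUnit_iff] at this
    rw [this] at hr
    omega
  have hirr : Irrational (Real.sqrt D) := irrational_sqrt_natCast_iff.mpr hnsq
  have hD1R : (1:ℝ) < (D:ℝ) := by exact_mod_cast (by omega : 1 < D)
  have hs1 : 1 < Real.sqrt D := by
    rw [show (1:ℝ) = Real.sqrt 1 by simp]
    exact Real.sqrt_lt_sqrt (by norm_num) hD1R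
  have hω1 : 1 < omg D := by
    unfold omg; split_ifs with h
    · have hD5 : 5 ≤ D := by omega
      have : (4:ℝ) < (D:ℝ) := by exact_mod_cast (by omega : 4 < D)
      have h2 : 2 < Real.sqrt D := by
        rw [show (2:ℝ) = Real.sqrt 4 by
          rw [show (4:ℝ) = 2^2 by norm_num, Real.sqrt_sq (by norm_num)]]
        exact Real.sqrt_lt_sqrt (by norm_num) this
      linarith
    · exact hs1
  have hωirr : Irrational (omg D) := by
    unfold omg; split_ifs with h
    · have h1 : Irrational ((1:ℚ) + Real.sqrt D) := hirr.ratCast_add 1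
      have h2 : Irrational (((1:ℚ) + Real.sqrt D) / (2:ℚ)) := h1.div_ratCast (by norm_num)
      simpa using h2
    · exact hirr
  have hωc : omgc D < 0 := by
    unfold omgc; split_ifs with h
    · have : 1 < Real.sqrt D := hs1
      linarith
    · linarith [Real.sqrt_pos.mpr (by positivity : (0:ℝ) < (D:ℝ))]
  have hdiff : omg D - omgc D = Real.sqrt (disc D) := by
    unfold omg omgc disc; split_ifs with h
    · ring
    · have h4 : Real.sqrt (4 * (D:ℝ)) = 2 * Real.sqrt D := by
        rw [Real.sqrt_mul (by norm_num : (0:ℝ) ≤ 4),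
          show (4:ℝ) = 2^2 by norm_num, Real.sqrt_sq (by norm_num)]
      rw [h4]; ring
  -- γ facts
  have hgam : ∀ nn : ℕ, Irrational (gam D nn) ∧ 1 < gam D nn := by
    intro nn
    induction nn with
    | zero =>
      constructor
      · exact hωirr.add_intCast _
      · have h0 : (0:ℝ) ≤ -omgc D := by linarith
        have h1 : (0:ℤ) ≤ ⌊-omgc D⌋ := Int.floor_nonneg.mpr h0
        have h2 : (0:ℝ) ≤ ((⌊-omgc D⌋ : ℤ) : ℝ) := by exact_mod_cast h1
        show 1 < sigmaD D
        unfold sigmaD; linarith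
    | succ nn ih =>
      have hne : gam D nn ≠ ((⌊gam D nn⌋ : ℤ) : ℝ) := ih.1.ne_int _
      have hfl : ((⌊gam D nn⌋ : ℤ) : ℝ) < gam D nn :=
        lt_of_le_of_ne (Int.floor_le _) (Ne.symm hne)
      have hf0 : 0 < gam D nn - ⌊gam D nn⌋ := by linarith
      have hf1 : gam D nn - ⌊gam D nn⌋ < 1 := by
        have := Int.lt_floor_add_one (gam D nn); linarith
      constructor
      · show Irrational (1 / (gam D nn - ⌊gam D nn⌋))
        rw [one_div]
        exact (ih.1.sub_intCast _).inv
      · show 1 < 1 / (gam D nn - ⌊gam D nn⌋)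
        exact (one_lt_div hf0).mpr hf1
  -- p 0 = ⌊omg D⌋
  have hu0 : uD D 0 = ⌊omg D⌋ + ⌊-omgc D⌋ := by
    show ⌊gam D 0⌋ = _
    show ⌊sigmaD D⌋ = _
    unfold sigmaD
    rw [Int.floor_add_intCast]
  have hp0' : p 0 = ⌊omg D⌋ := by
    by_cases h : D % 4 = 1
    · -- D % 4 = 1 : -omgc = omg - 1
      have hco : -omgc D = omg D - 1 := by unfold omg omgc; rw [if_pos h, if_pos h]; ring
      have hc : ⌊-omgc D⌋ = ⌊omg D⌋ - 1 := by
        rw [hco, show omg D - 1 = omg D - ((1:ℤ):ℝ) by norm_num, Int.floor_sub_intCast]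
      rw [hp0, hu0, hc]
      rw [Int.ceil_eq_iff]
      constructor
      · push_cast; linarith
      · push_cast; linarith
    · have hco : -omgc D = omg D := by unfold omg omgc; rw [if_neg h, if_neg h]; ring
      rw [hp0, hu0, hco]
      rw [Int.ceil_eq_iff]
      constructor
      · push_cast; linarith
      · push_cast; linarith
  -- key recurrence for the conjugates
  have hK : ∀ k : ℕ, ac D p q ((k:ℤ) - 1) = -(gam D (k+1)) * ac D p q (k:ℤ) := by
    intro k
    induction k with
    | zero =>
      simp only [Nat.cast_zero, zero_sub, zero_add]
      have hL : ac D p q (-1 : ℤ) = 1 := by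
        show ((p (-1) : ℝ)) - (q (-1) : ℝ) * omg D = 1
        rw [hpm1, hqm1]; norm_num
      rw [hL]
      have hne : omg D ≠ ((⌊omg D⌋ : ℤ) : ℝ) := hωirr.ne_int _
      have hfl : ((⌊omg D⌋ : ℤ) : ℝ) < omg D :=
        lt_of_le_of_ne (Int.floor_le _) (Ne.symm hne)
      have hF : (0:ℝ) < omg D - ⌊omg D⌋ := by linarith
      have hg1 : gam D 1 = 1 / (omg D - ⌊omg D⌋) := by
        show 1 / (gam D 0 - ⌊gam D 0⌋) = _
        have h0 : gam D 0 = omg D + ((⌊-omgc D⌋ : ℤ) : ℝ) := rfl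
        have h1 : ⌊gam D 0⌋ = ⌊omg D⌋ + ⌊-omgc D⌋ := by rw [h0, Int.floor_add_intCast]
        rw [h1, h0]
        congr 1
        push_cast; ring
      have hac0 : ac D p q (0:ℤ) = -(omg D - ⌊omg D⌋) := by
        show ((p 0 : ℝ)) - (q 0 : ℝ) * omg D = _
        rw [hp0', hq0]; push_cast; ring
      rw [hg1, hac0]
      have hFne : omg D - ((⌊omg D⌋:ℤ):ℝ) ≠ 0 := ne_of_gt hF
      rw [Int.self_sub_floor] at hFne
      field_simp [hFne]
    | succ k ih =>
      have e1 : (((k:ℕ)+1 : ℕ) : ℤ) - 1 = (k:ℤ) := by push_cast; ring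
      have e2 : (((k:ℕ)+1 : ℕ) : ℤ) = (k:ℤ) + 1 := by push_cast; ring
      rw [e1, e2]
      have hpr := hprec ((k:ℤ) - 1) (by omega)
      have hqr := hqrec ((k:ℤ) - 1) (by omega)
      have e3 : (k:ℤ) - 1 + 2 = (k:ℤ) + 1 := by ring
      have e4 : (k:ℤ) - 1 + 1 = (k:ℤ) := by ring
      rw [e3, e4] at hpr hqr
      have e5 : ((k:ℤ) + 1).toNat = k + 1 := by omega
      rw [e5] at hpr hqr
      have hu : (uD D (k+1) : ℝ) = ((⌊gam D (k+1)⌋ : ℤ) : ℝ) := rfl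
      have hacs : ac D p q ((k:ℤ)+1) =
          ((⌊gam D (k+1)⌋ : ℤ) : ℝ) * ac D p q (k:ℤ) + ac D p q ((k:ℤ)-1) := by
        show ((p ((k:ℤ)+1) : ℝ)) - (q ((k:ℤ)+1) : ℝ) * omg D = _
        rw [hpr, hqr]
        show _ = ((⌊gam D (k+1)⌋ : ℤ) : ℝ) * ((p (k:ℤ) : ℝ) - (q (k:ℤ) : ℝ) * omg D)
            + ((p ((k:ℤ)-1) : ℝ) - (q ((k:ℤ)-1) : ℝ) * omg D)
        push_cast [uD]
        ring
      have hne : gam D (k+1) ≠ ((⌊gam D (k+1)⌋ : ℤ) : ℝ) := (hgam (k+1)).1.ne_int _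
      have hfl : ((⌊gam D (k+1)⌋ : ℤ) : ℝ) < gam D (k+1) :=
        lt_of_le_of_ne (Int.floor_le _) (Ne.symm hne)
      have hF : (0:ℝ) < gam D (k+1) - ⌊gam D (k+1)⌋ := by linarith
      have hgs : gam D (k+2) = 1 / (gam D (k+1) - ⌊gam D (k+1)⌋) := rfl
      rw [hacs, ih, hgs]
      have hFne : gam D (k+1) - ((⌊gam D (k+1)⌋:ℤ):ℝ) ≠ 0 := ne_of_gt hF
      rw [Int.self_sub_floor] at hFne
      field_simp [hFne]
      ring
  -- sign of the conjugates
  have hsign : ∀ k : ℕ, 0 < (-1:ℝ)^k * ac D p q ((k:ℤ) - 1) := by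
    intro k
    induction k with
    | zero =>
      simp only [Nat.cast_zero, zero_sub, pow_zero]
      have hL : ac D p q (-1 : ℤ) = 1 := by
        show ((p (-1) : ℝ)) - (q (-1) : ℝ) * omg D = 1
        rw [hpm1, hqm1]; norm_num
      rw [hL]; norm_num
    | succ k ih =>
      have hKk := hK k
      have hg1 : 1 < gam D (k+1) := (hgam (k+1)).2
      have e1 : (((k:ℕ)+1 : ℕ) : ℤ) - 1 = (k:ℤ) := by push_cast; ring
      rw [e1]
      rw [hKk] at ih
      have h2 : (-1:ℝ)^k * ac D p q (k:ℤ) < 0 := by nlinarith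
      have h3 : (-1:ℝ)^(k+1) * ac D p q (k:ℤ) = -((-1:ℝ)^k * ac D p q (k:ℤ)) := by
        rw [pow_succ]; ring
      rw [h3]; linarith
  -- positivity of p, q
  have hpq : ∀ k : ℕ, (1 ≤ p ((k:ℤ) - 1) ∧ 0 ≤ q ((k:ℤ) - 1)) ∧ (1 ≤ p (k:ℤ) ∧ 0 ≤ q (k:ℤ)) := by
    intro k
    induction k with
    | zero =>
      simp only [Nat.cast_zero, zero_sub]
      refine ⟨⟨?_, ?_⟩, ?_, ?_⟩
      · show 1 ≤ p (-1); simp [hpm1]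
      · show 0 ≤ q (-1); simp [hqm1]

      · have hu1 : 1 ≤ uD D 0 := by
          show 1 ≤ ⌊gam D 0⌋
          exact Int.le_floor.mpr (by exact_mod_cast (hgam 0).2.le)
        rw [hp0]
        have : (0:ℚ) < (uD D 0 : ℚ) / 2 := by
          have : (1:ℚ) ≤ (uD D 0 : ℚ) := by exact_mod_cast hu1
          linarith
        have := Int.ceil_pos.mpr this
        omega
      · simp [hq0]
    | succ k ih =>
      obtain ⟨h1, h2⟩ := ih
      have hpr := hprec ((k:ℤ) - 1) (by omega)
      have hqr := hqrec ((k:ℤ) - 1) (by omega)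
      have e3 : (k:ℤ) - 1 + 2 = (k:ℤ) + 1 := by ring
      have e4 : (k:ℤ) - 1 + 1 = (k:ℤ) := by ring
      rw [e3, e4] at hpr hqr
      have e5 : ((k:ℤ) + 1).toNat = k + 1 := by omega
      rw [e5] at hpr hqr
      have hu1 : 1 ≤ uD D (k+1) := by
        show 1 ≤ ⌊gam D (k+1)⌋
        exact Int.le_floor.mpr (by exact_mod_cast (hgam (k+1)).2.le)
      have e1 : (((k:ℕ)+1 : ℕ) : ℤ) - 1 = (k:ℤ) := by push_cast; ring
      have e2 : (((k:ℕ)+1 : ℕ) : ℤ) = (k:ℤ) + 1 := by push_cast; ring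
      rw [e1, e2]
      refine ⟨h2, ?_, ?_⟩
      · rw [hpr]; nlinarith [h2.1, h1.1, h2.2, h1.2, hu1]
      · rw [hqr]; nlinarith [h2.1, h1.1, h2.2, h1.2, hu1]
  -- determinant
  have hdet : ∀ k : ℕ, p ((k:ℤ) - 1) * q (k:ℤ) - p (k:ℤ) * q ((k:ℤ) - 1) = (-1)^k := by
    intro k
    induction k with
    | zero =>
      simp only [Nat.cast_zero, zero_sub, pow_zero]
      rw [hpm1, hqm1, hq0]; ring
    | succ k ih =>
      have hpr := hprec ((k:ℤ) - 1) (by omega)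
      have hqr := hqrec ((k:ℤ) - 1) (by omega)
      have e3 : (k:ℤ) - 1 + 2 = (k:ℤ) + 1 := by ring
      have e4 : (k:ℤ) - 1 + 1 = (k:ℤ) := by ring
      rw [e3, e4] at hpr hqr
      have e5 : ((k:ℤ) + 1).toNat = k + 1 := by omega
      rw [e5] at hpr hqr
      have e1 : (((k:ℕ)+1 : ℕ) : ℤ) - 1 = (k:ℤ) := by push_cast; ring
      have e2 : (((k:ℕ)+1 : ℕ) : ℤ) = (k:ℤ) + 1 := by push_cast; ring
      rw [e1, e2, hpr, hqr]
      linear_combination (-1 : ℤ) * ih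
  -- main computation
  intro i hi hodd m n
  obtain ⟨j, hj⟩ := hodd
  obtain ⟨k, hk, hke⟩ : ∃ k : ℕ, i = (k:ℤ) - 1 ∧ k % 2 = 0 :=
    ⟨(i+1).toNat, by omega, by omega⟩
  subst hk
  have e4 : (k:ℤ) - 1 + 1 = (k:ℤ) := by ring
  have e5 : ((k:ℤ) - 1 + 2).toNat = k + 1 := by omega
  rw [e4, e5]
  set a := ar D p q ((k:ℤ) - 1) with ha
  set b := ar D p q (k:ℤ) with hb
  set a' := ac D p q ((k:ℤ) - 1) with ha'
  set b' := ac D p q (k:ℤ) with hb'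
  set g := gam D (k+1) with hg
  have hgpos : 0 < g := lt_trans zero_lt_one (hgam (k+1)).2
  have hg0 : g ≠ 0 := ne_of_gt hgpos
  have hKk : a' = -g * b' := hK k
  have hone : ((-1:ℝ))^k = 1 := by
    rcases Nat.even_iff.mpr hke with he
    exact he.neg_one_pow
  have hone' : ((-1:ℤ))^k = 1 := by
    rcases Nat.even_iff.mpr hke with he
    exact he.neg_one_pow
  -- a' > 0
  have ha'pos : 0 < a' := by
    have := hsign k
    rw [hone] at this
    simpa using this
  -- a > 0
  have hapos : 0 < a := by
    have hp1 : 1 ≤ p ((k:ℤ) - 1) := (hpq k).1.1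
    have hq1 : 0 ≤ q ((k:ℤ) - 1) := (hpq k).1.2
    have hp1R : (1:ℝ) ≤ (p ((k:ℤ) - 1) : ℝ) := by exact_mod_cast hp1
    have hq1R : (0:ℝ) ≤ (q ((k:ℤ) - 1) : ℝ) := by exact_mod_cast hq1
    have : a = (p ((k:ℤ) - 1) : ℝ) - (q ((k:ℤ) - 1) : ℝ) * omgc D := rfl
    rw [this]
    nlinarith
  -- N_i = a * a'
  have hN : Ni D p q ((k:ℤ) - 1) = a * a' := by
    show |a * a'| = a * a'
    exact abs_of_pos (mul_pos hapos ha'pos)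
  -- √Δ = b a' - a b'
  have hdetk := hdet k
  rw [hone'] at hdetk
  have hdetR : ((p ((k:ℤ)-1) : ℝ)) * (q (k:ℤ) : ℝ) - (p (k:ℤ) : ℝ) * (q ((k:ℤ)-1) : ℝ) = 1 := by
    exact_mod_cast hdetk
  have hΔ : Real.sqrt (disc D) = b * a' - a * b' := by
    have hexp : b * a' - a * b' =
        (((p ((k:ℤ)-1) : ℝ)) * (q (k:ℤ) : ℝ) - (p (k:ℤ) : ℝ) * (q ((k:ℤ)-1) : ℝ)) *
          (omg D - omgc D) := by
      show ((p (k:ℤ) : ℝ) - (q (k:ℤ) : ℝ) * omgc D) * ((p ((k:ℤ)-1) : ℝ) - (q ((k:ℤ)-1) : ℝ) * omg D)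
          - ((p ((k:ℤ)-1) : ℝ) - (q ((k:ℤ)-1) : ℝ) * omgc D) * ((p (k:ℤ) : ℝ) - (q (k:ℤ) : ℝ) * omg D) = _
      ring
    rw [hexp, hdetR, one_mul, hdiff]
  rw [hN, hΔ, hKk]
  field_simp
  ring
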